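/- Let σ = τ_y and let u = δ + αx + γz with δ, α, γ ∈ O_K and ν_D(u) = 0 (note σ(u) = u, so u is a symmetric unit of O_D). Then ν_K(δ² - aα²) = 0 (i.e. δ + αx is a unit of the ring of integers of the field K(x)) and there exists an invertible t ∈ D with u = σ(t)·(δ + αx)·t; that is, ⟨u⟩ ≅ ⟨δ + αx⟩ as hermitian forms over (D, τ_y). -/

import Mathlib

noncomputable section

/-- A surjective discrete valuation `ν : K → ℤ` on a field `K`
(the value of `ν` at `0` is irrelevant: only nonzero elements are constrained). -/
structure DVal (K : Type) [Field K] : Type where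
  ν : K → ℤ
  ν_mul : ∀ x y : K, x ≠ 0 → y ≠ 0 → ν (x * y) = ν x + ν y
  ν_add : ∀ x y : K, x ≠ 0 → y ≠ 0 → x + y ≠ 0 → min (ν x) (ν y) ≤ ν (x + y)
  ν_one : ν 1 = 0
  ν_surj : ∀ n : ℤ, ∃ x : K, x ≠ 0 ∧ ν x = n

namespace DVal

variable {K : Type} [Field K]

/-- `x` belongs to the valuation ring `O_K`. -/
def Int (V : DVal K) (x : K) : Prop := x = 0 ∨ 0 ≤ V.ν x

/-- `x` is a unit of the valuation ring `O_K`. -/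
def IntUnit (V : DVal K) (x : K) : Prop := x ≠ 0 ∧ V.ν x = 0

/-- `x` belongs to the maximal ideal `m_K` of the valuation ring `O_K`. -/
def MaxIdeal (V : DVal K) (x : K) : Prop := x = 0 ∨ 1 ≤ V.ν x

/-- `K` is complete with respect to the valuation `ν`: every Cauchy sequence converges. -/
def IsComplete (V : DVal K) : Prop :=
  ∀ f : ℕ → K,
    (∀ M : ℤ, ∃ N : ℕ, ∀ m n : ℕ, N ≤ m → N ≤ n →
      f m - f n = 0 ∨ M ≤ V.ν (f m - f n)) →
    ∃ L : K, ∀ M : ℤ, ∃ N : ℕ, ∀ n : ℕ, N ≤ n →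
      f n - L = 0 ∨ M ≤ V.ν (f n - L)

/-- The residue field `k = O_K/m_K` has characteristic different from `2`,
i.e. `2` is a unit of the valuation ring `O_K`. -/
def ResCharNeTwo (V : DVal K) : Prop := (2 : K) ≠ 0 ∧ V.ν 2 = 0


section Helpers
variable {K : Type} [Field K] (V : DVal K)

lemma nu_neg_one : V.ν (-1 : K) = 0 := by
  have h := V.ν_mul (-1) (-1) (by norm_num) (by norm_num)
  rw [show ((-1:K)*(-1)) = 1 by ring, V.ν_one] at h
  omega

lemma nu_neg {x : K} (hx : x ≠ 0) : V.ν (-x) = V.ν x := by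
  have h := V.ν_mul (-1) x (by norm_num) hx
  rw [show ((-1:K)*x) = -x by ring, V.nu_neg_one] at h
  omega

lemma nu_inv {x : K} (hx : x ≠ 0) : V.ν x⁻¹ = - V.ν x := by
  have h := V.ν_mul x x⁻¹ hx (inv_ne_zero hx)
  rw [mul_inv_cancel₀ hx, V.ν_one] at h; omega

lemma nu_add_cases {x y : K} {M : ℤ} (hx : x = 0 ∨ M ≤ V.ν x)
    (hy : y = 0 ∨ M ≤ V.ν y) : x + y = 0 ∨ M ≤ V.ν (x + y) := by
  by_cases hx0 : x = 0
  · subst hx0; simpa using hy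
  by_cases hy0 : y = 0
  · subst hy0; simpa using hx
  by_cases h0 : x + y = 0
  · exact Or.inl h0
  have h := V.ν_add x y hx0 hy0 h0
  right
  rcases hx with rfl | hx; · exact absurd rfl hx0
  rcases hy with rfl | hy; · exact absurd rfl hy0
  omega

lemma nu_add_eq {x y : K} (hx : x ≠ 0) (hy : y = 0 ∨ V.ν x < V.ν y) :
    x + y ≠ 0 ∧ V.ν (x + y) = V.ν x := by
  rcases hy with rfl | hlt
  · simpa using hx
  by_cases hy0 : y = 0
  · subst hy0; simpa using hx
  have hne : x + y ≠ 0 := by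
    intro h
    have hyx : y = -x := by linear_combination h
    rw [hyx, V.nu_neg hx] at hlt; omega
  have h1 := V.ν_add x y hx hy0 hne
  have h2 := V.ν_add (x+y) (-y) hne (neg_ne_zero.2 hy0) (by rw [show x+y+-y = x by ring]; exact hx)
  rw [show x+y+-y = x by ring, V.nu_neg hy0] at h2
  exact ⟨hne, by omega⟩

lemma nu_unit_of_close_one {w : K} (hw : w - 1 = 0 ∨ 1 ≤ V.ν (w-1)) :
    w ≠ 0 ∧ V.ν w = 0 := by
  have h := V.nu_add_eq (x := (1:K)) (y := w - 1) one_ne_zero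
    (by rcases hw with h | h; · exact Or.inl h
        · right; rw [V.ν_one]; omega)
  rw [show (1:K) + (w-1) = w by ring, V.ν_one] at h
  exact h

lemma nu_sq {x : K} (hx : x ≠ 0) : V.ν (x^2) = 2 * V.ν x := by
  rw [pow_two, V.ν_mul x x hx hx]; ring

lemma hensel_sqrt (hcomp : V.IsComplete) (h2 : (2:K) ≠ 0) (hv2 : V.ν 2 = 0) {c : K}
    (hc : c - 1 = 0 ∨ 1 ≤ V.ν (c - 1)) :
    ∃ s : K, s ≠ 0 ∧ s ^ 2 = c ∧ (s - 1 = 0 ∨ 1 ≤ V.ν (s - 1)) := by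
  have hc0 : c ≠ 0 := by
    intro h; subst h
    rcases hc with h | h
    · norm_num at h
    · rw [show (0:K) - 1 = -1 by ring, V.nu_neg_one] at h; omega
  set f : ℕ → K := fun n => Nat.rec (1:K) (fun _ x => (x + c/x)/2) n with hf
  have hf0 : f 0 = 1 := rfl
  have hfs : ∀ n, f (n+1) = (f n + c / f n)/2 := fun n => rfl
  have key : ∀ n : ℕ, (f n ≠ 0 ∧ V.ν (f n) = 0) ∧ (f n - 1 = 0 ∨ 1 ≤ V.ν (f n - 1)) ∧
      (f n ^ 2 - c = 0 ∨ (n:ℤ)+1 ≤ V.ν (f n ^ 2 - c)) := by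
    intro n
    induction n with
    | zero =>
      refine ⟨⟨one_ne_zero, V.ν_one⟩, Or.inl (by rw [hf0]; ring), ?_⟩
      rw [hf0]
      by_cases hc1 : c - 1 = 0
      · left; linear_combination -hc1
      · rcases hc with h | h
        · exact absurd h hc1
        · right
          rw [show (1:K)^2 - c = -(c-1) by ring, V.nu_neg hc1]
          push_cast; omega
    | succ n ih =>
      obtain ⟨⟨hx0, hνx⟩, hx1, he⟩ := ih
      set x := f n with hxdef
      have h2x : (2*x : K) ≠ 0 := mul_ne_zero h2 hx0
      have hν2x : V.ν (2*x) = 0 := by rw [V.ν_mul 2 x h2 hx0, hv2, hνx]; norm_num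
      have id1 : f (n+1) - 1 = ((x-1)^2 + (c-1)) / (2*x) := by
        rw [hfs n, ← hxdef]; field_simp; ring
      have id2 : f (n+1) ^ 2 - c = (x^2 - c)^2 / (2*x)^2 := by
        rw [hfs n, ← hxdef]; field_simp; ring
      have hclose : f (n+1) - 1 = 0 ∨ 1 ≤ V.ν (f (n+1) - 1) := by
        by_cases hnum0 : (x-1)^2 + (c-1) = 0
        · left; rw [id1, hnum0, zero_div]
        · right
          have hnum : 1 ≤ V.ν ((x-1)^2 + (c-1)) := by
            have hsq : (x-1)^2 = 0 ∨ 1 ≤ V.ν ((x-1)^2) := by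
              by_cases hx1ne : x - 1 = 0
              · left; rw [hx1ne]; ring
              · right
                rcases hx1 with h | h
                · exact absurd h hx1ne
                · rw [V.nu_sq hx1ne]; omega
            rcases V.nu_add_cases hsq hc with h | h
            · exact absurd h hnum0
            · exact h
          rw [id1, div_eq_mul_inv, V.ν_mul _ _ hnum0 (inv_ne_zero h2x), V.nu_inv h2x, hν2x]
          omega
      have hunit := V.nu_unit_of_close_one hclose
      refine ⟨hunit, hclose, ?_⟩
      by_cases he0 : x^2 - c = 0
      · left; rw [id2, he0]; simp
      · right
        rcases he with h | h
        · exact absurd h he0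
        have hsq : ((2*x)^2 : K) ≠ 0 := pow_ne_zero _ h2x
        rw [id2, div_eq_mul_inv, V.ν_mul _ _ (pow_ne_zero _ he0) (inv_ne_zero hsq),
          V.nu_inv hsq, V.nu_sq he0, V.nu_sq h2x, hν2x]
        push_cast; omega
  
  -- consecutive differences
  have hdiff : ∀ n : ℕ, f (n+1) - f n = 0 ∨ (n:ℤ)+1 ≤ V.ν (f (n+1) - f n) := by
    intro n
    obtain ⟨⟨hx0, hνx⟩, _, he⟩ := key n
    have h2x : (2*(f n) : K) ≠ 0 := mul_ne_zero h2 hx0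
    have hν2x : V.ν (2*(f n)) = 0 := by rw [V.ν_mul 2 (f n) h2 hx0, hv2, hνx]; norm_num
    have id3 : f (n+1) - f n = -((f n)^2 - c) / (2*(f n)) := by
      rw [hfs n]; field_simp; ring
    by_cases he0 : (f n)^2 - c = 0
    · left; rw [id3, he0]; simp
    · right
      rcases he with h | h
      · exact absurd h he0
      rw [id3, div_eq_mul_inv, V.ν_mul _ _ (neg_ne_zero.2 he0) (inv_ne_zero h2x),
        V.nu_neg he0, V.nu_inv h2x, hν2x]
      omega
  -- telescoping Cauchy estimate
  have tele : ∀ N n m : ℕ, N ≤ n → n ≤ m →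
      f m - f n = 0 ∨ (N:ℤ)+1 ≤ V.ν (f m - f n) := by
    intro N n m hNn hnm
    induction m, hnm using Nat.le_induction with
    | base => left; ring
    | succ m hnm ih =>
      have h1 : f (m+1) - f m = 0 ∨ (N:ℤ)+1 ≤ V.ν (f (m+1) - f m) := by
        rcases hdiff m with h | h
        · exact Or.inl h
        · right; have : (N:ℤ) ≤ m := by exact_mod_cast le_trans hNn hnm
          omega
      have := V.nu_add_cases (M := (N:ℤ)+1) h1 ih
      rwa [show f (m+1) - f m + (f m - f n) = f (m+1) - f n by ring] at this
  -- Cauchy in the required sense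
  have hcau : ∀ M : ℤ, ∃ N : ℕ, ∀ m n : ℕ, N ≤ m → N ≤ n →
      f m - f n = 0 ∨ M ≤ V.ν (f m - f n) := by
    intro M
    refine ⟨M.toNat, fun m n hm hn => ?_⟩
    have hM : M ≤ (M.toNat : ℤ) + 1 := by omega
    rcases le_total n m with h | h
    · rcases tele M.toNat n m hn h with h0 | h0
      · exact Or.inl h0
      · exact Or.inr (le_trans hM h0)
    · by_cases hz : f n - f m = 0
      · left; rw [show f m - f n = -(f n - f m) by ring, hz]; ring
      · rcases tele M.toNat m n hm h with h0 | h0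
        · exact absurd h0 hz
        · right
          rw [show f m - f n = -(f n - f m) by ring, V.nu_neg hz]
          exact le_trans hM h0
  -- the limit
  obtain ⟨L, hL⟩ := hcomp f hcau
  have hLclose : L - 1 = 0 ∨ 1 ≤ V.ν (L - 1) := by
    obtain ⟨N1, hN1⟩ := hL 1
    have h1 : f N1 - L = 0 ∨ 1 ≤ V.ν (f N1 - L) := hN1 N1 le_rfl
    have h2' : L - f N1 = 0 ∨ 1 ≤ V.ν (L - f N1) := by
      by_cases hz : L - f N1 = 0
      · exact Or.inl hz
      · rcases h1 with h | h
        · exact absurd (by rw [show L - f N1 = -(f N1 - L) by ring, h]; ring) hz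
        · right
          rw [show L - f N1 = -(f N1 - L) by ring,
            V.nu_neg (fun hzz => hz (by rw [show L - f N1 = -(f N1 - L) by ring, hzz]; ring))]
          exact h
    have := V.nu_add_cases (M := 1) h2' ((key N1).2.1)
    rwa [show L - f N1 + (f N1 - 1) = L - 1 by ring] at this
  obtain ⟨hL0, hνL⟩ := V.nu_unit_of_close_one hLclose
  refine ⟨L, hL0, ?_, hLclose⟩
  by_contra hne
  have hne' : L^2 - c ≠ 0 := fun h => hne (by linear_combination h)
  set M : ℤ := V.ν (L^2 - c) + 1 with hM
  obtain ⟨N1, hN1⟩ := hL M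
  set n : ℕ := max N1 M.toNat with hn
  have hfn := key n
  obtain ⟨⟨hx0, hνx⟩, _, he⟩ := hfn
  have hterm1 : L^2 - (f n)^2 = 0 ∨ M ≤ V.ν (L^2 - (f n)^2) := by
    by_cases hz : L - f n = 0
    · left; rw [show L^2 - (f n)^2 = (L - f n)*(L + f n) by ring, hz]; ring
    · by_cases hz2 : L + f n = 0
      · left; rw [show L^2 - (f n)^2 = (L - f n)*(L + f n) by ring, hz2]; ring
      · right
        have h1 : M ≤ V.ν (L - f n) := by
          rcases hN1 n (le_max_left _ _) with h | h
          · exact absurd (by rw [show L - f n = -(f n - L) by ring, h]; ring) hz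
          · rw [show L - f n = -(f n - L) by ring,
              V.nu_neg (fun hzz => hz (by rw [show L - f n = -(f n - L) by ring, hzz]; ring))]
            exact h
        have h2' : 0 ≤ V.ν (L + f n) := by
          have := V.ν_add L (f n) hL0 hx0 hz2
          rw [hνL, hνx] at this; omega
        rw [show L^2 - (f n)^2 = (L - f n)*(L + f n) by ring,
          V.ν_mul _ _ hz hz2]
        omega
  have hterm2 : (f n)^2 - c = 0 ∨ M ≤ V.ν ((f n)^2 - c) := by
    rcases he with h | h
    · exact Or.inl h
    · right
      have : M ≤ (n:ℤ) + 1 := by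
        have := le_max_right N1 M.toNat
        omega
      omega
  have := V.nu_add_cases hterm1 hterm2
  rw [show L^2 - (f n)^2 + ((f n)^2 - c) = L^2 - c by ring] at this
  rcases this with h | h
  · exact hne' h
  · omega

end Helpers

end DVal

/-- The reduced norm of a quaternion `u = δ + αx + βy + γz ∈ ℍ[K,a,b]`:
`Nrd u = u·τ(u) = δ² - aα² - bβ² + abγ²`. -/
def qnrd {K : Type} [Field K] (a b : K) (u : QuaternionAlgebra K a 0 b) : K :=
  u.re ^ 2 - a * u.imI ^ 2 - b * u.imJ ^ 2 + a * b * u.imK ^ 2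

/-- The canonical involution `τ(δ + αx + βy + γz) = δ - αx - βy - γz` of `ℍ[K,a,b]`. -/
def qtau {K : Type} [Field K] {a b : K} (u : QuaternionAlgebra K a 0 b) :
    QuaternionAlgebra K a 0 b :=
  ⟨u.re, -u.imI, -u.imJ, -u.imK⟩

/-- The norm form `⟨1,-a,-b,ab⟩` of `ℍ[K,a,b]` is anisotropic over `K`
(equivalently, `ℍ[K,a,b]` is a division ring). -/
def QAniso {K : Type} [Field K] (a b : K) : Prop :=
  ∀ d e f g : K, d ^ 2 - a * e ^ 2 - b * f ^ 2 + a * b * g ^ 2 = 0 →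
    d = 0 ∧ e = 0 ∧ f = 0 ∧ g = 0

/-- The valuation `ν_D(u) = (1/2)·ν_K(Nrd u)` of the quaternion division algebra
`D = ℍ[K,a,b]` (at nonzero `u`). -/
def qnu {K : Type} [Field K] (V : DVal K) (a b : K) (u : QuaternionAlgebra K a 0 b) : ℚ :=
  (V.ν (qnrd a b u) : ℚ) / 2

set_option maxHeartbeats 2000000 in
/-- if `u = δ + αx + γz` is a symmetric unit of `O_D` for `σ = τ_y` then
`δ + αx` is a unit of the ring of integers of `K(x)` (i.e. `ν_K(δ² - aα²) = 0`) and
`⟨u⟩ ≅ ⟨δ + αx⟩` over `(D, τ_y)`. -/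
theorem stmt_7 (K : Type) [Field K] (V : DVal K)
    -- K is complete with residue field of characteristic ≠ 2
    (hcomp : V.IsComplete) (hchar : V.ResCharNeTwo)
    -- D = ℍ[K,a,ϖ] with a ∈ O_K^×, ϖ a uniformizer, D a division ring
    (a ϖ : K) (ha0 : a ≠ 0) (hva : V.ν a = 0) (hϖ0 : ϖ ≠ 0) (hvϖ : V.ν ϖ = 1)
    (haniso : QAniso a ϖ)
    -- σ = τ_y (μ = λ⁻¹)
    (mu : QuaternionAlgebra K a 0 ϖ)
    (hmu : (⟨0, 0, 1, 0⟩ : QuaternionAlgebra K a 0 ϖ) * mu = 1) (hmu' : mu * (⟨0, 0, 1, 0⟩ : QuaternionAlgebra K a 0 ϖ) = 1)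
    (σ : QuaternionAlgebra K a 0 ϖ → QuaternionAlgebra K a 0 ϖ)
    (hσ : ∀ u, σ u = (⟨0, 0, 1, 0⟩ : QuaternionAlgebra K a 0 ϖ) * qtau u * mu)
    -- u = δ + αx + γz with coordinates in O_K and ν_D(u) = 0
    (δ α γ : K) (hδ : V.Int δ) (hα : V.Int α) (hγ : V.Int γ)
    (hu0 : (⟨δ, α, 0, γ⟩ : QuaternionAlgebra K a 0 ϖ) ≠ 0)
    (hval : qnu V a ϖ (⟨δ, α, 0, γ⟩ : QuaternionAlgebra K a 0 ϖ) = 0) :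
    V.IntUnit (δ ^ 2 - a * α ^ 2) ∧ ∃ t : QuaternionAlgebra K a 0 ϖ, IsUnit t ∧
      (⟨δ, α, 0, γ⟩ : QuaternionAlgebra K a 0 ϖ) =
        σ t * (⟨δ, α, 0, 0⟩ : QuaternionAlgebra K a 0 ϖ) * t := by
  obtain ⟨h2, hv2⟩ := hchar
  -- the reduced norm of u
  have hqnrd : qnrd a ϖ (⟨δ, α, 0, γ⟩ : QuaternionAlgebra K a 0 ϖ) =
      (δ^2 - a*α^2) + a*ϖ*γ^2 := by
    simp [qnrd]; try ring
  have hνNrd : V.ν ((δ^2 - a*α^2) + a*ϖ*γ^2) = 0 := by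
    have h := hval
    rw [qnu, hqnrd] at h
    have : ((V.ν ((δ^2 - a*α^2) + a*ϖ*γ^2) : ℚ)) = 0 := by
      field_simp at h; exact_mod_cast h
    exact_mod_cast this
  have hNrd_ne : (δ^2 - a*α^2) + a*ϖ*γ^2 ≠ 0 := by
    intro h
    obtain ⟨h1, h2', h3, h4⟩ := haniso δ α 0 γ (by linear_combination h)
    exact hu0 (by rw [h1, h2', h4]; rfl)
  have hN_ne : δ^2 - a*α^2 ≠ 0 := by
    intro h
    obtain ⟨h1, h2', -, -⟩ := haniso δ α 0 0 (by linear_combination h)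
    have hγ0 : γ ≠ 0 := by intro hg; exact hu0 (by rw [h1, h2', hg]; rfl)
    have hna := hνNrd
    rw [show (δ^2 - a*α^2) + a*ϖ*γ^2 = a*ϖ*γ^2 by rw [h]; ring] at hna
    have hm1 := V.ν_mul (a*ϖ) (γ^2) (mul_ne_zero ha0 hϖ0) (pow_ne_zero 2 hγ0)
    have hm2 := V.ν_mul a ϖ ha0 hϖ0
    have hm3 := V.nu_sq hγ0
    omega
  have hνN : V.ν (δ^2 - a*α^2) = 0 := by
    by_cases hγ0 : γ = 0
    · rw [show δ^2 - a*α^2 = (δ^2 - a*α^2) + a*ϖ*γ^2 by rw [hγ0]; ring]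
      exact hνNrd
    · have hγint : 0 ≤ V.ν γ := hγ.resolve_left hγ0
      have hT_ne : a*ϖ*γ^2 ≠ 0 := mul_ne_zero (mul_ne_zero ha0 hϖ0) (pow_ne_zero 2 hγ0)
      have hνT : 1 ≤ V.ν (a*ϖ*γ^2) := by
        rw [V.ν_mul _ _ (mul_ne_zero ha0 hϖ0) (pow_ne_zero 2 hγ0),
          V.ν_mul a ϖ ha0 hϖ0, hva, hvϖ, V.nu_sq hγ0]
        omega
      have hδ2 : δ^2 = 0 ∨ (0:ℤ) ≤ V.ν (δ^2) := by
        by_cases hδ0 : δ = 0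
        · left; rw [hδ0]; ring
        · right; rw [V.nu_sq hδ0]; have := hδ.resolve_left hδ0; omega
      have haα2 : -(a*α^2) = 0 ∨ (0:ℤ) ≤ V.ν (-(a*α^2)) := by
        by_cases hα0 : α = 0
        · left; rw [hα0]; ring
        · right
          have hne' : a*α^2 ≠ 0 := mul_ne_zero ha0 (pow_ne_zero 2 hα0)
          rw [V.nu_neg hne', V.ν_mul a (α^2) ha0 (pow_ne_zero 2 hα0), hva, V.nu_sq hα0]
          have := hα.resolve_left hα0; omega
      have hN0' : (0:ℤ) ≤ V.ν (δ^2 - a*α^2) := by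
        have hcc := V.nu_add_cases hδ2 haα2
        rw [show δ^2 + -(a*α^2) = δ^2 - a*α^2 by ring] at hcc
        exact hcc.resolve_left hN_ne
      by_contra hne
      have h1 : 1 ≤ V.ν (δ^2 - a*α^2) := by omega
      have hmin := V.ν_add _ _ hN_ne hT_ne hNrd_ne
      rw [hνNrd] at hmin
      omega
  refine ⟨⟨hN_ne, hνN⟩, ?_⟩
  set N : K := δ^2 - a*α^2 with hN
  -- Hensel square roots
  have hT_cases : a*ϖ*γ^2/N = 0 ∨ 1 ≤ V.ν (a*ϖ*γ^2/N) := by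
    by_cases hγ0 : γ = 0
    · left; rw [hγ0]; ring_nf
    · right
      have hγint : 0 ≤ V.ν γ := hγ.resolve_left hγ0
      have hT_ne : a*ϖ*γ^2 ≠ 0 := mul_ne_zero (mul_ne_zero ha0 hϖ0) (pow_ne_zero 2 hγ0)
      rw [div_eq_mul_inv, V.ν_mul _ _ hT_ne (inv_ne_zero hN_ne), V.nu_inv hN_ne,
        V.ν_mul _ _ (mul_ne_zero ha0 hϖ0) (pow_ne_zero 2 hγ0),
        V.ν_mul a ϖ ha0 hϖ0, hva, hvϖ, V.nu_sq hγ0, hνN]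
      omega
  have hε : (1 + a*ϖ*γ^2/N) - 1 = 0 ∨ 1 ≤ V.ν ((1 + a*ϖ*γ^2/N) - 1) := by
    rw [show (1 + a*ϖ*γ^2/N) - 1 = a*ϖ*γ^2/N by ring]
    exact hT_cases
  obtain ⟨s, hs0, hs2, hs1⟩ := V.hensel_sqrt hcomp h2 hv2 hε
  have hc2 : ((1+s)/2) - 1 = 0 ∨ 1 ≤ V.ν (((1+s)/2) - 1) := by
    have hshow : ((1+s)/2) - 1 = (s-1)/2 := by field_simp; ring
    rw [hshow]
    by_cases hz : s - 1 = 0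
    · left; rw [hz, zero_div]
    · right
      rcases hs1 with h | h
      · exact absurd h hz
      · rw [div_eq_mul_inv, V.ν_mul _ _ hz (inv_ne_zero h2), V.nu_inv h2, hv2]; omega
  obtain ⟨p, hp0, hp2, -⟩ := V.hensel_sqrt hcomp h2 hv2 hc2
  have R2 : 2*p^2 = 1 + s := by rw [hp2]; field_simp
  have R1 : s^2 * N = N + a*ϖ*γ^2 := by rw [hs2]; field_simp
  have hs2ne : (s^2 : K) ≠ 0 := pow_ne_zero 2 hs0
  have h2p : (2*p : K) ≠ 0 := mul_ne_zero h2 hp0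
  -- mu is y/ϖ
  have hyinv1 : (⟨0,0,ϖ⁻¹,0⟩ : QuaternionAlgebra K a 0 ϖ) * ⟨0,0,1,0⟩ = 1 := by
    ext <;> simp [QuaternionAlgebra.re_mul, QuaternionAlgebra.imI_mul,
      QuaternionAlgebra.imJ_mul, QuaternionAlgebra.imK_mul] <;> field_simp
  have hmu_eq : mu = (⟨0,0,ϖ⁻¹,0⟩ : QuaternionAlgebra K a 0 ϖ) := by
    calc mu = 1 * mu := (one_mul _).symm
    _ = ((⟨0,0,ϖ⁻¹,0⟩ : QuaternionAlgebra K a 0 ϖ) * ⟨0,0,1,0⟩) * mu := by rw [hyinv1]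
    _ = (⟨0,0,ϖ⁻¹,0⟩ : QuaternionAlgebra K a 0 ϖ) * ((⟨0,0,1,0⟩ : QuaternionAlgebra K a 0 ϖ) * mu) :=
        mul_assoc _ _ _
    _ = (⟨0,0,ϖ⁻¹,0⟩ : QuaternionAlgebra K a 0 ϖ) := by rw [hmu, mul_one]
  -- the element t and the auxiliary m
  set q : K := (2*p)⁻¹ with hq
  set t : QuaternionAlgebra K a 0 ϖ := ⟨p, 0, -(a*α*γ*q)/N, δ*γ*q/N⟩ with ht
  set m : QuaternionAlgebra K a 0 ϖ := ⟨0, 0, -(a*α*γ)/N, δ*γ/N⟩ with hm_def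
  have A1 : ((⟨0,0,1,0⟩ : QuaternionAlgebra K a 0 ϖ) * qtau t * ⟨0,0,ϖ⁻¹,0⟩) *
      (⟨δ,α,0,0⟩ : QuaternionAlgebra K a 0 ϖ) = (⟨δ,α,0,0⟩ : QuaternionAlgebra K a 0 ϖ) * t := by
    ext <;> simp [ht, qtau, QuaternionAlgebra.re_mul, QuaternionAlgebra.imI_mul,
      QuaternionAlgebra.imJ_mul, QuaternionAlgebra.imK_mul] <;> field_simp [hN_ne, hϖ0] <;> ring
  have hqq : q * (2*p) = 1 := inv_mul_cancel₀ h2p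
  have A2 : t * t = 1 + m := by
    ext
    · simp only [ht, hm_def, QuaternionAlgebra.re_mul, QuaternionAlgebra.re_add,
        QuaternionAlgebra.re_one, hq]
      field_simp
      linear_combination (a*ϖ*γ^2)*hN + N*R1 + N^2*(2*p^2-1+s)*R2
    · simp only [ht, hm_def, QuaternionAlgebra.imI_mul, QuaternionAlgebra.imI_add,
        QuaternionAlgebra.imI_one]
      ring
    · simp only [ht, hm_def, QuaternionAlgebra.imJ_mul, QuaternionAlgebra.imJ_add,
        QuaternionAlgebra.imJ_one, hq]
      field_simp
      ring
    · simp only [ht, hm_def, QuaternionAlgebra.imK_mul, QuaternionAlgebra.imK_add,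
        QuaternionAlgebra.imK_one, hq]
      field_simp
      ring
  have A3 : (⟨δ,α,0,0⟩ : QuaternionAlgebra K a 0 ϖ) * (1 + m) =
      (⟨δ,α,0,γ⟩ : QuaternionAlgebra K a 0 ϖ) := by
    ext <;> simp [hm_def, QuaternionAlgebra.re_mul, QuaternionAlgebra.imI_mul,
      QuaternionAlgebra.imJ_mul, QuaternionAlgebra.imK_mul] <;> field_simp [hN_ne] <;>
      (try rw [hN]) <;> ring
  have hcommtm : t * m = m * t := by
    ext <;> simp [ht, hm_def, QuaternionAlgebra.re_mul, QuaternionAlgebra.imI_mul,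
      QuaternionAlgebra.imJ_mul, QuaternionAlgebra.imK_mul] <;> (try ring)
  have hfactor0 : (1 - m) * (1 + m) = (⟨s^2,0,0,0⟩ : QuaternionAlgebra K a 0 ϖ) := by
    ext
    · simp only [hm_def, QuaternionAlgebra.re_mul, QuaternionAlgebra.re_add,
        QuaternionAlgebra.re_sub, QuaternionAlgebra.re_one, QuaternionAlgebra.imI_add,
        QuaternionAlgebra.imI_sub, QuaternionAlgebra.imI_one, QuaternionAlgebra.imJ_add,
        QuaternionAlgebra.imJ_sub, QuaternionAlgebra.imJ_one, QuaternionAlgebra.imK_add,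
        QuaternionAlgebra.imK_sub, QuaternionAlgebra.imK_one]
      field_simp
      linear_combination (-(a*ϖ*γ^2))*hN + (-N)*R1
    · simp [hm_def, QuaternionAlgebra.imI_mul]
      try ring
    · simp [hm_def, QuaternionAlgebra.imJ_mul]
      try ring
    · simp [hm_def, QuaternionAlgebra.imK_mul]
      try ring
  have hfactor : (1 - m) * (1 + m) = ((s^2 : K) : QuaternionAlgebra K a 0 ϖ) := by
    rw [hfactor0]; rfl
  -- t is a unit
  have hTinv : t * (((s^2)⁻¹ : K) * ((1 - m) * t)) = 1 ∧
      (((s^2)⁻¹ : K) * ((1 - m) * t)) * t = 1 := by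
    have hc1 : t * (1 - m) = (1 - m) * t := by
      rw [mul_sub, sub_mul, mul_one, one_mul, hcommtm]
    have e1 : t * ((1 - m) * t) = ((s^2 : K) : QuaternionAlgebra K a 0 ϖ) := by
      rw [← mul_assoc, hc1, mul_assoc, A2, hfactor]
    have e2 : ((1 - m) * t) * t = ((s^2 : K) : QuaternionAlgebra K a 0 ϖ) := by
      rw [mul_assoc, A2, hfactor]
    constructor
    · calc t * (((s^2)⁻¹ : K) * ((1 - m) * t))
          = ((s^2)⁻¹ : K) * (t * ((1 - m) * t)) := by
            rw [← mul_assoc, ← QuaternionAlgebra.coe_commutes, mul_assoc]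
      _ = 1 := by rw [e1, ← QuaternionAlgebra.coe_mul, inv_mul_cancel₀ hs2ne,
            QuaternionAlgebra.coe_one]
    · calc (((s^2)⁻¹ : K) * ((1 - m) * t)) * t
          = ((s^2)⁻¹ : K) * (((1 - m) * t) * t) := by rw [mul_assoc]
      _ = 1 := by rw [e2, ← QuaternionAlgebra.coe_mul, inv_mul_cancel₀ hs2ne,
            QuaternionAlgebra.coe_one]
  refine ⟨t, ⟨⟨t, ((s^2)⁻¹ : K) * ((1 - m) * t), hTinv.1, hTinv.2⟩, rfl⟩, ?_⟩
  rw [hσ t, hmu_eq]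
  calc (⟨δ,α,0,γ⟩ : QuaternionAlgebra K a 0 ϖ)
      = (⟨δ,α,0,0⟩ : QuaternionAlgebra K a 0 ϖ) * (1 + m) := A3.symm
    _ = (⟨δ,α,0,0⟩ : QuaternionAlgebra K a 0 ϖ) * (t * t) := by rw [A2]
    _ = ((⟨δ,α,0,0⟩ : QuaternionAlgebra K a 0 ϖ) * t) * t := (mul_assoc _ _ _).symm
    _ = (((⟨0,0,1,0⟩ : QuaternionAlgebra K a 0 ϖ) * qtau t * ⟨0,0,ϖ⁻¹,0⟩) *
        (⟨δ,α,0,0⟩ : QuaternionAlgebra K a 0 ϖ)) * t := by rw [A1]
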